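/- Let G be a bipartite graph in which every left vertex has degree exactly 4 and every left vertex subset of size 4 has at least 11 right neighbors. If additionally G has no 4-cycles, then every left vertex subset of size 5 has at least 12 right neighbors. -/
import Mathlib


/-- 4-left-regular, no 4-cycles, and the 4→11 expansion condition imply the
5→12 expansion condition. -/
theorem stmt_2 {V C : Type*} [DecidableEq V] [DecidableEq C]
    (N : V → Finset C)
    (hdeg : ∀ v, (N v).card = 4)
    (hexp4 : ∀ S : Finset V, S.card = 4 → 11 ≤ (S.biUnion N).card)
    (h4cyc : ∀ u w : V, u ≠ w → (N u ∩ N w).card ≤ 1) :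
    ∀ S : Finset V, S.card = 5 → 12 ≤ (S.biUnion N).card := by
  intro S hS
  by_contra hcon
  push_neg at hcon
  set T := S.biUnion N with hT
  obtain ⟨v0, hv0⟩ : S.Nonempty := by rw [← Finset.card_pos, hS]; norm_num
  have hTcard : T.card = 11 := by
    have h4 : (S.erase v0).card = 4 := by rw [Finset.card_erase_of_mem hv0, hS]
    have h1 := hexp4 _ h4
    have hsub : (S.erase v0).biUnion N ⊆ T :=
      Finset.biUnion_subset_biUnion_of_subset_left _ (Finset.erase_subset _ _)
    have h2 := le_trans h1 (Finset.card_le_card hsub)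
    omega
  have hEq : ∀ v ∈ S, (S.erase v).biUnion N = T := by
    intro v hv
    apply Finset.eq_of_subset_of_card_le
      (Finset.biUnion_subset_biUnion_of_subset_left _ (Finset.erase_subset _ _))
    rw [hTcard]
    exact hexp4 _ (by rw [Finset.card_erase_of_mem hv, hS])
  have hfib : ∀ c ∈ T, 2 ≤ (S.filter (fun v => c ∈ N v)).card := by
    intro c hc
    obtain ⟨v, hv, hcv⟩ := Finset.mem_biUnion.mp hc
    have hc' : c ∈ (S.erase v).biUnion N := by rw [hEq v hv]; exact hc
    obtain ⟨u, hu, hcu⟩ := Finset.mem_biUnion.mp hc'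
    have huv : u ≠ v := (Finset.mem_erase.mp hu).1
    have huS : u ∈ S := (Finset.mem_erase.mp hu).2
    have hsub : ({u, v} : Finset V) ⊆ S.filter (fun w => c ∈ N w) := by
      intro x hx
      simp only [Finset.mem_insert, Finset.mem_singleton] at hx
      rcases hx with rfl | rfl <;> simp [Finset.mem_filter, *]
    calc 2 = ({u, v} : Finset V).card := by
          rw [Finset.card_insert_of_notMem (by simpa using huv), Finset.card_singleton]
      _ ≤ _ := Finset.card_le_card hsub
  have hsum : ∑ v ∈ S, (N v).card = ∑ c ∈ T, (S.filter (fun v => c ∈ N v)).card := by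
    calc ∑ v ∈ S, (N v).card
        = ∑ v ∈ S, ∑ c ∈ T, (if c ∈ N v then 1 else 0) := by
          refine Finset.sum_congr rfl fun v hv => ?_
          rw [← Finset.card_filter]
          congr 1
          rw [Finset.filter_mem_eq_inter]
          exact (Finset.inter_eq_right.mpr fun c hc => Finset.mem_biUnion.mpr ⟨v, hv, hc⟩).symm
      _ = ∑ c ∈ T, ∑ v ∈ S, (if c ∈ N v then 1 else 0) := Finset.sum_comm
      _ = ∑ c ∈ T, (S.filter (fun v => c ∈ N v)).card := by
          exact Finset.sum_congr rfl fun c _ => (Finset.card_filter _ _).symm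
  have h20 : ∑ v ∈ S, (N v).card = 20 := by
    rw [Finset.sum_congr rfl fun v _ => hdeg v, Finset.sum_const, hS]; rfl
  have h22 : 22 ≤ ∑ c ∈ T, (S.filter (fun v => c ∈ N v)).card := by
    calc (22 : ℕ) = ∑ _c ∈ T, 2 := by rw [Finset.sum_const, hTcard]; rfl
      _ ≤ _ := Finset.sum_le_sum hfib
  omega
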